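/- For random variables A, B, C, D, if A is conditionally independent of B given D, then I[A : C | B,D] ≥ I[A : C | D]. -/

import Mathlib

open scoped BigOperators
open Finset
set_option linter.unusedSectionVars false

/-- Probability that random variable `X` takes value `x` under pmf `p` on `Ω`. -/
noncomputable def prob {Ω α : Type*} [Fintype Ω] [DecidableEq α]
    (p : Ω → ℝ) (X : Ω → α) (x : α) : ℝ :=
  ∑ ω, if X ω = x then p ω else 0

/-- Shannon entropy (base 2) of random variable `X` under pmf `p`. -/
noncomputable def entropy {Ω α : Type*} [Fintype Ω] [Fintype α] [DecidableEq α]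
    (p : Ω → ℝ) (X : Ω → α) : ℝ :=
  -∑ x, prob p X x * Real.logb 2 (prob p X x)

/-- Mutual information I[X : Y]. -/
noncomputable def mutualInfo {Ω α β : Type*} [Fintype Ω] [Fintype α] [Fintype β]
    [DecidableEq α] [DecidableEq β] (p : Ω → ℝ) (X : Ω → α) (Y : Ω → β) : ℝ :=
  entropy p X + entropy p Y - entropy p (fun ω => (X ω, Y ω))

/-- Conditional mutual information I[X : Y | Z] = H(X,Z) + H(Y,Z) - H(X,Y,Z) - H(Z). -/
noncomputable def condMutualInfo {Ω α β γ : Type*} [Fintype Ω] [Fintype α] [Fintype β] [Fintype γ]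
    [DecidableEq α] [DecidableEq β] [DecidableEq γ]
    (p : Ω → ℝ) (X : Ω → α) (Y : Ω → β) (Z : Ω → γ) : ℝ :=
  entropy p (fun ω => (X ω, Z ω)) + entropy p (fun ω => (Y ω, Z ω))
    - entropy p (fun ω => (X ω, Y ω, Z ω)) - entropy p Z

section lemmas
variable {Ω α β : Type*} [Fintype Ω] [Fintype α] [Fintype β] [DecidableEq α] [DecidableEq β]
  (p : Ω → ℝ) (X : Ω → α)

lemma prob_nonneg (hp : ∀ ω, 0 ≤ p ω) (x : α) : 0 ≤ prob p X x :=
  Finset.sum_nonneg fun ω _ => by split_ifs with h; exacts [hp ω, le_refl 0]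

lemma sum_prob : ∑ x, prob p X x = ∑ ω, p ω := by
  unfold prob
  rw [Finset.sum_comm]
  refine Finset.sum_congr rfl fun ω _ => ?_
  simp

lemma prob_map (f : α → β) (y : β) :
    prob p (fun ω => f (X ω)) y = ∑ x, if f x = y then prob p X x else 0 := by
  unfold prob
  have h1 : ∀ x : α, (if f x = y then ∑ ω, if X ω = x then p ω else 0 else 0)
      = ∑ ω, if X ω = x then (if f x = y then p ω else 0) else 0 := by
    intro x
    split_ifs with h
    · rfl
    · simp
  simp only [h1]
  rw [Finset.sum_comm]
  refine Finset.sum_congr rfl fun ω _ => ?_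
  simp only [Finset.sum_ite_eq, Finset.mem_univ, if_true]

lemma entropy_map (f : α → β) :
    entropy p (fun ω => f (X ω))
      = -∑ x, prob p X x * Real.logb 2 (prob p (fun ω => f (X ω)) (f x)) := by
  unfold entropy
  congr 1
  have h : ∀ y : β, prob p (fun ω => f (X ω)) y * Real.logb 2 (prob p (fun ω => f (X ω)) y)
      = ∑ x, if f x = y then prob p X x * Real.logb 2 (prob p (fun ω => f (X ω)) y) else 0 := by
    intro y
    rw [prob_map, Finset.sum_mul]
    exact Finset.sum_congr rfl fun x _ => by split_ifs <;> simp
  simp only [h]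
  rw [Finset.sum_comm]
  refine Finset.sum_congr rfl fun x _ => ?_
  simp only [Finset.sum_ite_eq, Finset.mem_univ, if_true]

lemma prob_comp_injective {f : α → β} (hf : Function.Injective f) (x : α) :
    prob p (fun ω => f (X ω)) (f x) = prob p X x := by
  unfold prob
  refine Finset.sum_congr rfl fun ω _ => ?_
  simp [hf.eq_iff]

lemma entropy_comp_injective {f : α → β} (hf : Function.Injective f) :
    entropy p (fun ω => f (X ω)) = entropy p X := by
  rw [entropy_map]
  unfold entropy
  congr 1
  exact Finset.sum_congr rfl fun x _ => by rw [prob_comp_injective p X hf]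

lemma prob_fst_marginal {γ : Type*} [Fintype γ] [DecidableEq γ]
    (V : Ω → α × γ) (z : γ) :
    ∑ x, prob p V (x, z) = prob p (fun ω => (V ω).2) z := by
  rw [prob_map p V Prod.snd z, Fintype.sum_prod_type]
  refine Finset.sum_congr rfl fun x _ => ?_
  simp

end lemmas

lemma prob_comp_le {Ω α β : Type*} [Fintype Ω] [Fintype α] [Fintype β] [DecidableEq α]
    [DecidableEq β] (p : Ω → ℝ) (hp : ∀ ω, 0 ≤ p ω) (X : Ω → α) (f : α → β) (x : α) :
    prob p X x ≤ prob p (fun ω => f (X ω)) (f x) := by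
  rw [prob_map p X f (f x)]
  calc prob p X x = if f x = f x then prob p X x else 0 := by simp
    _ ≤ ∑ x', if f x' = f x then prob p X x' else 0 := by
        refine Finset.single_le_sum (f := fun x' => if f x' = f x then prob p X x' else 0)
          (fun i _ => ?_) (Finset.mem_univ x)
        split_ifs
        · exact prob_nonneg p X hp i
        · exact le_refl 0

lemma condMutualInfo_nonneg {Ω α β γ : Type*} [Fintype Ω] [Fintype α] [Fintype β] [Fintype γ]
    [DecidableEq α] [DecidableEq β] [DecidableEq γ]
    (p : Ω → ℝ) (hp : ∀ ω, 0 ≤ p ω) (hp1 : ∑ ω, p ω = 1)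
    (X : Ω → α) (Y : Ω → β) (Z : Ω → γ) :
    0 ≤ condMutualInfo p X Y Z := by
  set W : Ω → α × β × γ := fun ω => (X ω, Y ω, Z ω) with hW
  set q : α × β × γ → ℝ := prob p W with hq
  set pXZ : α × γ → ℝ := prob p (fun ω => (X ω, Z ω)) with hpXZ
  set pYZ : β × γ → ℝ := prob p (fun ω => (Y ω, Z ω)) with hpYZ
  set pZ : γ → ℝ := prob p Z with hpZ
  -- entropies expressed as sums over the joint distribution
  have hXZ : entropy p (fun ω => (X ω, Z ω))
      = -∑ w, q w * Real.logb 2 (pXZ (w.1, w.2.2)) :=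
    entropy_map p W (fun w => (w.1, w.2.2))
  have hYZ : entropy p (fun ω => (Y ω, Z ω))
      = -∑ w, q w * Real.logb 2 (pYZ (w.2.1, w.2.2)) :=
    entropy_map p W (fun w => (w.2.1, w.2.2))
  have hZ : entropy p Z = -∑ w, q w * Real.logb 2 (pZ w.2.2) :=
    entropy_map p W (fun w => w.2.2)
  have hXYZ : entropy p (fun ω => (X ω, Y ω, Z ω)) = -∑ w, q w * Real.logb 2 (q w) := by
    unfold entropy; rfl
  -- marginal bounds
  have hq0 : ∀ w, 0 ≤ q w := fun w => prob_nonneg p W hp w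
  have hqXZ : ∀ w : α × β × γ, q w ≤ pXZ (w.1, w.2.2) := fun w =>
    prob_comp_le p hp W (fun w => (w.1, w.2.2)) w
  have hqYZ : ∀ w : α × β × γ, q w ≤ pYZ (w.2.1, w.2.2) := fun w =>
    prob_comp_le p hp W (fun w => (w.2.1, w.2.2)) w
  have hqZ : ∀ w : α × β × γ, q w ≤ pZ w.2.2 := fun w =>
    prob_comp_le p hp W (fun w => w.2.2) w
  have hpXZ0 : ∀ v, 0 ≤ pXZ v := fun v => prob_nonneg p _ hp v
  have hpYZ0 : ∀ v, 0 ≤ pYZ v := fun v => prob_nonneg p _ hp v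
  have hpZ0 : ∀ z, 0 ≤ pZ z := fun z => prob_nonneg p _ hp z
  -- the key inequality in natural logs
  have step1 : ∀ w : α × β × γ,
      q w * (Real.log (pXZ (w.1, w.2.2)) + Real.log (pYZ (w.2.1, w.2.2))
        - Real.log (q w) - Real.log (pZ w.2.2))
      ≤ pXZ (w.1, w.2.2) * pYZ (w.2.1, w.2.2) / pZ w.2.2 - q w := by
    intro w
    by_cases hzero : q w = 0
    · rw [hzero]
      simp only [zero_mul, sub_zero]
      exact div_nonneg (mul_nonneg (hpXZ0 _) (hpYZ0 _)) (hpZ0 _)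
    · have hq' : 0 < q w := lt_of_le_of_ne (hq0 w) (Ne.symm hzero)
      have h1 : 0 < pXZ (w.1, w.2.2) := lt_of_lt_of_le hq' (hqXZ w)
      have h2 : 0 < pYZ (w.2.1, w.2.2) := lt_of_lt_of_le hq' (hqYZ w)
      have h3 : 0 < pZ w.2.2 := lt_of_lt_of_le hq' (hqZ w)
      have hu : 0 < pXZ (w.1, w.2.2) * pYZ (w.2.1, w.2.2) / (q w * pZ w.2.2) := by positivity
      have hlog := Real.log_le_sub_one_of_pos hu
      have hlogeq : Real.log (pXZ (w.1, w.2.2) * pYZ (w.2.1, w.2.2) / (q w * pZ w.2.2))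
          = Real.log (pXZ (w.1, w.2.2)) + Real.log (pYZ (w.2.1, w.2.2))
            - Real.log (q w) - Real.log (pZ w.2.2) := by
        rw [Real.log_div (by positivity) (by positivity),
          Real.log_mul (ne_of_gt h1) (ne_of_gt h2),
          Real.log_mul (ne_of_gt hq') (ne_of_gt h3)]
        ring
      calc q w * (Real.log (pXZ (w.1, w.2.2)) + Real.log (pYZ (w.2.1, w.2.2))
            - Real.log (q w) - Real.log (pZ w.2.2))
          = q w * Real.log (pXZ (w.1, w.2.2) * pYZ (w.2.1, w.2.2) / (q w * pZ w.2.2)) := by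
            rw [hlogeq]
        _ ≤ q w * (pXZ (w.1, w.2.2) * pYZ (w.2.1, w.2.2) / (q w * pZ w.2.2) - 1) :=
            mul_le_mul_of_nonneg_left hlog (hq0 w)
        _ = pXZ (w.1, w.2.2) * pYZ (w.2.1, w.2.2) / pZ w.2.2 - q w := by
            field_simp
  -- sum of the "r" terms is at most 1
  have hmargX : ∀ z, ∑ x, pXZ (x, z) = pZ z := fun z =>
    prob_fst_marginal p (fun ω => (X ω, Z ω)) z
  have hmargY : ∀ z, ∑ y, pYZ (y, z) = pZ z := fun z =>
    prob_fst_marginal p (fun ω => (Y ω, Z ω)) z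
  have hsumpZ : ∑ z, pZ z = 1 := by rw [hpZ, sum_prob, hp1]
  have step2 : ∑ w : α × β × γ, pXZ (w.1, w.2.2) * pYZ (w.2.1, w.2.2) / pZ w.2.2 ≤ 1 := by
    rw [Fintype.sum_prod_type]
    simp only [Fintype.sum_prod_type]
    calc ∑ x, ∑ y, ∑ z, pXZ (x, z) * pYZ (y, z) / pZ z
        = ∑ x, ∑ z, ∑ y, pXZ (x, z) * pYZ (y, z) / pZ z :=
          Finset.sum_congr rfl fun x _ => Finset.sum_comm
      _ = ∑ z, ∑ x, ∑ y, pXZ (x, z) * pYZ (y, z) / pZ z := Finset.sum_comm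
      _ = ∑ z, pZ z * pZ z / pZ z := by
          refine Finset.sum_congr rfl fun z _ => ?_
          simp only [← Finset.sum_div, ← Finset.mul_sum, ← Finset.sum_mul]
          rw [hmargX, hmargY]
      _ ≤ ∑ z, pZ z := by
          refine Finset.sum_le_sum fun z _ => ?_
          by_cases h : pZ z = 0
          · simp [h]
          · rw [mul_div_assoc, div_self h, mul_one]
      _ = 1 := hsumpZ
  have step3 : ∑ w, q w = 1 := by rw [hq, sum_prob, hp1]
  have key : ∑ w : α × β × γ, q w * (Real.log (pXZ (w.1, w.2.2)) + Real.log (pYZ (w.2.1, w.2.2))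
      - Real.log (q w) - Real.log (pZ w.2.2)) ≤ 0 := by
    calc ∑ w : α × β × γ, q w * (Real.log (pXZ (w.1, w.2.2)) + Real.log (pYZ (w.2.1, w.2.2))
        - Real.log (q w) - Real.log (pZ w.2.2))
        ≤ ∑ w : α × β × γ, (pXZ (w.1, w.2.2) * pYZ (w.2.1, w.2.2) / pZ w.2.2 - q w) :=
          Finset.sum_le_sum fun w _ => step1 w
      _ = (∑ w : α × β × γ, pXZ (w.1, w.2.2) * pYZ (w.2.1, w.2.2) / pZ w.2.2) - ∑ w, q w :=
          Finset.sum_sub_distrib _ _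
      _ ≤ 1 - 1 := by rw [step3]; linarith [step2]
      _ = 0 := by ring
  -- conclude
  have hlog2 : (0:ℝ) < Real.log 2 := Real.log_pos one_lt_two
  have hterm : ∀ w : α × β × γ,
      q w * Real.logb 2 (q w) + q w * Real.logb 2 (pZ w.2.2)
        - q w * Real.logb 2 (pXZ (w.1, w.2.2)) - q w * Real.logb 2 (pYZ (w.2.1, w.2.2))
      = -(q w * (Real.log (pXZ (w.1, w.2.2)) + Real.log (pYZ (w.2.1, w.2.2))
        - Real.log (q w) - Real.log (pZ w.2.2))) / Real.log 2 := by
    intro w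
    simp only [Real.logb]
    field_simp
    ring
  have hfinal : 0 ≤ ∑ w : α × β × γ,
      (q w * Real.logb 2 (q w) + q w * Real.logb 2 (pZ w.2.2)
        - q w * Real.logb 2 (pXZ (w.1, w.2.2)) - q w * Real.logb 2 (pYZ (w.2.1, w.2.2))) := by
    calc (0:ℝ) ≤ (-(∑ w : α × β × γ, q w * (Real.log (pXZ (w.1, w.2.2))
          + Real.log (pYZ (w.2.1, w.2.2)) - Real.log (q w) - Real.log (pZ w.2.2)))) / Real.log 2 :=
          div_nonneg (neg_nonneg.2 key) hlog2.le
      _ = _ := by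
          rw [← Finset.sum_neg_distrib, Finset.sum_div]
          exact Finset.sum_congr rfl fun w _ => (hterm w).symm
  rw [condMutualInfo, hXZ, hYZ, hZ, hXYZ]
  simp only [Finset.sum_add_distrib, Finset.sum_sub_distrib] at hfinal ⊢
  linarith

/-- If A is conditionally independent of B given D, then I[A : C | B,D] ≥ I[A : C | D]. -/
theorem condMutualInfo_cond_ge {Ω α β γ δ : Type*} [Fintype Ω] [Fintype α] [Fintype β]
    [Fintype γ] [Fintype δ] [DecidableEq α] [DecidableEq β] [DecidableEq γ] [DecidableEq δ]
    (p : Ω → ℝ) (hp : ∀ ω, 0 ≤ p ω) (hp1 : ∑ ω, p ω = 1)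
    (A : Ω → α) (B : Ω → β) (C : Ω → γ) (D : Ω → δ)
    (hind : condMutualInfo p A B D = 0) :
    condMutualInfo p A C (fun ω => (B ω, D ω)) ≥ condMutualInfo p A C D := by
  have hnn := condMutualInfo_nonneg p hp hp1 A B (fun ω => (C ω, D ω))
  have e1 : entropy p (fun ω => (C ω, B ω, D ω)) = entropy p (fun ω => (B ω, C ω, D ω)) :=
    entropy_comp_injective p (fun ω => (B ω, C ω, D ω))
      (f := fun w => (w.2.1, w.1, w.2.2))
      (fun a b h => by
        simp only [Prod.ext_iff] at h ⊢
        tauto)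
  have e2 : entropy p (fun ω => (A ω, C ω, B ω, D ω))
      = entropy p (fun ω => (A ω, B ω, C ω, D ω)) :=
    entropy_comp_injective p (fun ω => (A ω, B ω, C ω, D ω))
      (f := fun w => (w.1, w.2.2.1, w.2.1, w.2.2.2))
      (fun a b h => by
        simp only [Prod.ext_iff] at h ⊢
        tauto)
  simp only [condMutualInfo] at hind hnn ⊢
  linarith
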